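/- For any matrices G_0, ..., G_{T-1} ∈ R^{m×n}, it holds that tr( (Σ_{t=0}^{T-1} G_t G_tᵀ)^{1/2} ) ≤ Σ_{j=1}^m sqrt( Σ_{i=1}^n Σ_{t=0}^{T-1} (G_t)_{j,i}² ) ≤ Σ_{j=1}^m Σ_{i=1}^n sqrt( Σ_{t=0}^{T-1} (G_t)_{j,i}² ), where (G_t)_{j,i} denotes the (j,i)-th entry of G_t; i.e., the proven ASGO bound is never worse than the full-matrix AdaGrad bound (up to the diameter factor). -/

import Mathlib

open Matrix
open scoped Classical

/-- The positive semidefinite square root of a positive semidefinite real matrix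
(junk value `0` if the matrix is not positive semidefinite). -/
noncomputable def psdSqrt {k : ℕ} (X : Matrix (Fin k) (Fin k) ℝ) : Matrix (Fin k) (Fin k) ℝ :=
  if h : X.PosSemidef then
    (h.1.eigenvectorUnitary : Matrix (Fin k) (Fin k) ℝ) *
      diagonal (fun i => Real.sqrt (h.1.eigenvalues i)) *
      (star (h.1.eigenvectorUnitary : Matrix (Fin k) (Fin k) ℝ))
  else 0

lemma sqrt_add_le' {a b : ℝ} (ha : 0 ≤ a) (hb : 0 ≤ b) :
    Real.sqrt (a + b) ≤ Real.sqrt a + Real.sqrt b := by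
  rw [show a + b = Real.sqrt a ^ 2 + Real.sqrt b ^ 2 by
    rw [Real.sq_sqrt ha, Real.sq_sqrt hb]]
  have h1 : Real.sqrt a ^ 2 + Real.sqrt b ^ 2 ≤ (Real.sqrt a + Real.sqrt b) ^ 2 := by
    have := mul_nonneg (Real.sqrt_nonneg a) (Real.sqrt_nonneg b)
    nlinarith
  calc Real.sqrt (Real.sqrt a ^ 2 + Real.sqrt b ^ 2)
      ≤ Real.sqrt ((Real.sqrt a + Real.sqrt b) ^ 2) := Real.sqrt_le_sqrt h1
    _ = Real.sqrt a + Real.sqrt b := Real.sqrt_sq (by positivity)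

lemma sqrt_sum_le {ι : Type*} (s : Finset ι) (f : ι → ℝ) (hf : ∀ i ∈ s, 0 ≤ f i) :
    Real.sqrt (∑ i ∈ s, f i) ≤ ∑ i ∈ s, Real.sqrt (f i) := by
  induction s using Finset.induction_on with
  | empty => simp
  | insert a s hx ih =>
    rw [Finset.sum_insert hx, Finset.sum_insert hx]
    have h1 : 0 ≤ ∑ i ∈ s, f i :=
      Finset.sum_nonneg fun i hi => hf i (Finset.mem_insert_of_mem hi)
    calc Real.sqrt (f a + ∑ i ∈ s, f i)
        ≤ Real.sqrt (f a) + Real.sqrt (∑ i ∈ s, f i) :=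
          sqrt_add_le' (hf a (Finset.mem_insert_self a s)) h1
      _ ≤ Real.sqrt (f a) + ∑ i ∈ s, Real.sqrt (f i) := by
          gcongr
          exact ih fun i hi => hf i (Finset.mem_insert_of_mem hi)

set_option maxHeartbeats 1000000 in
/-- for any matrices `G_0, ..., G_{T-1} ∈ ℝ^{m×n}`,
`tr((∑_t G_t G_tᵀ)^{1/2}) ≤ ∑_j sqrt(∑_i ∑_t (G_t)_{j,i}²) ≤ ∑_j ∑_i sqrt(∑_t (G_t)_{j,i}²)`:
the proven ASGO bound is never worse than the full-matrix AdaGrad bound. -/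
theorem stmt13 (m n T : ℕ) (G : Fin T → Matrix (Fin m) (Fin n) ℝ) :
    (psdSqrt (∑ t, G t * (G t)ᵀ)).trace ≤ ∑ j, Real.sqrt (∑ i, ∑ t, (G t j i) ^ 2) ∧
    ∑ j, Real.sqrt (∑ i, ∑ t, (G t j i) ^ 2) ≤ ∑ j, ∑ i, Real.sqrt (∑ t, (G t j i) ^ 2) := by
  set A : Matrix (Fin m) (Fin m) ℝ := ∑ t, G t * (G t)ᵀ with hA
  have hPSD : A.PosSemidef := by
    apply Finset.sum_induction _ _ (fun a b ha hb => ha.add hb) (Matrix.PosSemidef.zero)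
    intro t _
    simpa using Matrix.posSemidef_self_mul_conjTranspose (G t)
  have hAdiag : ∀ j, A j j = ∑ i, ∑ t, (G t j i) ^ 2 := by
    intro j
    simp only [hA, Matrix.sum_apply, Matrix.mul_apply, Matrix.transpose_apply]
    rw [Finset.sum_comm]
    congr 1; ext i; congr 1; ext t; ring
  constructor
  · set S := (hPSD.1.eigenvectorUnitary : Matrix (Fin m) (Fin m) ℝ) *
      diagonal (fun i => Real.sqrt (hPSD.1.eigenvalues i)) *
      (star (hPSD.1.eigenvectorUnitary : Matrix (Fin m) (Fin m) ℝ)) with hS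
    have hSpsd : S.PosSemidef :=
      (PosSemidef.diagonal (fun i => Real.sqrt_nonneg _)).mul_mul_conjTranspose_same _
    have hSsym : Sᵀ = S := by simpa using hSpsd.1.eq
    have hSS : S * S = A := by
      have hU : star (hPSD.1.eigenvectorUnitary : Matrix (Fin m) (Fin m) ℝ) *
          (hPSD.1.eigenvectorUnitary : Matrix (Fin m) (Fin m) ℝ) = 1 :=
        (hPSD.1.eigenvectorUnitary).2.1
      calc S * S = (hPSD.1.eigenvectorUnitary : Matrix (Fin m) (Fin m) ℝ) *
            (diagonal (fun i => Real.sqrt (hPSD.1.eigenvalues i)) *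
              (star (hPSD.1.eigenvectorUnitary : Matrix (Fin m) (Fin m) ℝ) *
                (hPSD.1.eigenvectorUnitary : Matrix (Fin m) (Fin m) ℝ)) *
              diagonal (fun i => Real.sqrt (hPSD.1.eigenvalues i))) *
            (star (hPSD.1.eigenvectorUnitary : Matrix (Fin m) (Fin m) ℝ)) := by
            simp only [hS, mul_assoc]
        _ = (hPSD.1.eigenvectorUnitary : Matrix (Fin m) (Fin m) ℝ) *
            diagonal (fun i => hPSD.1.eigenvalues i) *
            (star (hPSD.1.eigenvectorUnitary : Matrix (Fin m) (Fin m) ℝ)) := by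
            rw [hU, mul_one, diagonal_mul_diagonal]
            congr 3; ext i; exact Real.mul_self_sqrt (hPSD.eigenvalues_nonneg i)
        _ = A := by
            conv_rhs => rw [hPSD.1.spectral_theorem]
            simp [Unitary.conjStarAlgAut_apply]
    have hdiag : ∀ j, S j j ≤ Real.sqrt (A j j) := by
      intro j
      have hsq : S j j ^ 2 ≤ A j j := by
        rw [← hSS]
        have heq : (S * S) j j = ∑ k, S j k ^ 2 := by
          simp only [Matrix.mul_apply]
          congr 1; ext k
          have hk : S k j = S j k := by
            conv_lhs => rw [← hSsym]
            simp [Matrix.transpose_apply]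
          rw [hk]; ring
        rw [heq]
        exact Finset.single_le_sum (f := fun k => S j k ^ 2)
          (fun k _ => sq_nonneg _) (Finset.mem_univ j)
      exact Real.le_sqrt_of_sq_le hsq
    have hps : psdSqrt A = S := dif_pos hPSD
    rw [hps, Matrix.trace]
    calc ∑ j, S.diag j ≤ ∑ j, Real.sqrt (A j j) := Finset.sum_le_sum fun j _ => hdiag j
      _ = ∑ j, Real.sqrt (∑ i, ∑ t, (G t j i) ^ 2) := by
          congr 1; ext j; rw [hAdiag j]
  · apply Finset.sum_le_sum
    intro j _
    exact sqrt_sum_le _ _ fun i _ => Finset.sum_nonneg fun t _ => sq_nonneg _
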